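/- arXiv:1506.05320 — 2 statements merged into one kernel-verified Lean document; each statement's English description precedes it below -/
import Mathlib

section
/- Let f : ℝ^n → ℝ be convex differentiable, U ⊆ ℝ^n closed convex, K a closed convex cone, ρ > 0, and let u*_ρ minimize ψ_ρ(u) = f(u) + (ρ/2)dist_K(Gu+g)² over U. If u* ∈ U is feasible, i.e., G u* + g ∈ K, and f(u*_ρ) ≥ f_* where f_* = inf_{u∈U} f(u), then dist_K(G u*_ρ + g) ≤ √((f(u*) − f_*)/ρ). -/
open scoped RealInnerProductSpace

/-- Quadratic penalty infeasibility bound: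
`dist_K(G u*_ρ + g) ≤ √((f(u*) − f_*)/ρ)`. -/
theorem stmt9 (n m : ℕ)
    (f : EuclideanSpace ℝ (Fin n) → ℝ) (hf : ConvexOn ℝ Set.univ f)
    (hfd : Differentiable ℝ f)
    (U : Set (EuclideanSpace ℝ (Fin n))) (hUcl : IsClosed U) (hUconv : Convex ℝ U)
    (K : Set (EuclideanSpace ℝ (Fin m))) (hKne : K.Nonempty) (hKcl : IsClosed K)
    (hKconv : Convex ℝ K) (hKcone : ∀ c : ℝ, 0 ≤ c → ∀ x ∈ K, c • x ∈ K)
    (P : EuclideanSpace ℝ (Fin m) → EuclideanSpace ℝ (Fin m))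
    (hP : ∀ x, P x ∈ K ∧ ∀ y ∈ K, ‖x - P x‖ ≤ ‖x - y‖)
    (G : EuclideanSpace ℝ (Fin n) →L[ℝ] EuclideanSpace ℝ (Fin m))
    (g : EuclideanSpace ℝ (Fin m)) (ρ : ℝ) (hρ : 0 < ρ)
    (uρ : EuclideanSpace ℝ (Fin n)) (huρ : uρ ∈ U)
    (hmin : ∀ u ∈ U, f uρ + ρ / 2 * ‖G uρ + g - P (G uρ + g)‖ ^ 2
      ≤ f u + ρ / 2 * ‖G u + g - P (G u + g)‖ ^ 2)
    (ustar : EuclideanSpace ℝ (Fin n)) (hustar : ustar ∈ U)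
    (hfeas : G ustar + g ∈ K)
    (fstar : ℝ) (hlb : ∀ u ∈ U, fstar ≤ f u) :
    ‖G uρ + g - P (G uρ + g)‖ ≤ Real.sqrt ((f ustar - fstar) / ρ) := by
  set x := G uρ + g with hx
  set d := ‖x - P x‖ with hd
  have hd0 : (0:ℝ) ≤ d := norm_nonneg _
  -- Key inequality along the segment
  have key : ∀ t : ℝ, 0 < t → t ≤ 1 →
      ρ * d ^ 2 ≤ (f ustar - fstar) + (ρ / 2 * d ^ 2) * t := by
    intro t ht0 ht1
    set ut := (1 - t) • uρ + t • ustar with hut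
    have hutU : ut ∈ U := hUconv huρ hustar (by linarith) ht0.le (by ring)
    set y := G ustar + g with hy
    have hxt : G ut + g = (1 - t) • x + t • y := by
      simp only [hut, map_add, map_smul, hx, hy]
      module
    -- projection bound at ut
    have hq : (1 - t) • (P x) + t • y ∈ K :=
      hKconv (hP x).1 hfeas (by linarith) ht0.le (by ring)
    have hpen : ‖G ut + g - P (G ut + g)‖ ≤ (1 - t) * d := by
      have h1 := (hP (G ut + g)).2 _ hq
      have h2 : G ut + g - ((1 - t) • (P x) + t • y) = (1 - t) • (x - P x) := by
        rw [hxt]; module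
      rw [h2, norm_smul] at h1
      simpa [abs_of_nonneg (by linarith : (0:ℝ) ≤ 1 - t)] using h1
    have hpen2 : ‖G ut + g - P (G ut + g)‖ ^ 2 ≤ ((1 - t) * d) ^ 2 := by
      have := pow_le_pow_left₀ (norm_nonneg _) hpen 2
      simpa using this
    -- convexity of f
    have hfconv : f ut ≤ (1 - t) * f uρ + t * f ustar := by
      have := hf.2 (Set.mem_univ uρ) (Set.mem_univ ustar)
        (by linarith : (0:ℝ) ≤ 1 - t) ht0.le (by ring : (1 - t) + t = 1)
      simpa [hut, smul_eq_mul] using this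
    have hmin' := hmin ut hutU
    have hfρ : fstar ≤ f uρ := hlb uρ huρ
    nlinarith [hmin', hfconv, hpen2, sq_nonneg d, sq_nonneg (1 - t),
      mul_pos hρ ht0, mul_nonneg hρ.le (sq_nonneg d)]
  -- take t → 0
  have hmain : ρ * d ^ 2 ≤ f ustar - fstar := by
    refine le_of_forall_pos_le_add ?_
    intro ε hε
    set c := ρ / 2 * d ^ 2 with hc
    have hc0 : 0 ≤ c := by positivity
    have hc1 : (0:ℝ) < c + 1 := by linarith
    set t := min 1 (ε / (c + 1)) with ht
    have ht0 : 0 < t := lt_min one_pos (by positivity)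
    have ht1 : t ≤ 1 := min_le_left _ _
    have hct : c * t ≤ ε := by
      calc c * t ≤ (c + 1) * (ε / (c + 1)) := by
            apply mul_le_mul (by linarith) (min_le_right _ _) ht0.le hc1.le
        _ = ε := by field_simp
    have := key t ht0 ht1
    linarith
  have hsq : d ^ 2 ≤ (f ustar - fstar) / ρ := by
    rw [le_div_iff₀ hρ]; nlinarith
  calc d ≤ Real.sqrt (d ^ 2) := by
        rw [Real.sqrt_sq hd0]
    _ ≤ Real.sqrt ((f ustar - fstar) / ρ) := Real.sqrt_le_sqrt hsq
end

section
/- Under the setting of the smooth penalty problem, if ū ∈ U satisfies ψ_ρ(ū) − ψ_ρ(u*_ρ) ≤ ε (where ψ_ρ(u) = f(u) + (ρ/2)dist_K(Gu+g)² and u*_ρ minimizes ψ_ρ over U), then (ρ/2)·(dist_K(G u*_ρ + g) − dist_K(G ū + g))² ≤ ε; consequently dist_K(G ū + g) ≤ √(2ε/ρ) + dist_K(G u*_ρ + g). -/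
open scoped RealInnerProductSpace

/-- Smooth penalty: if `ψ_ρ(ū) − ψ_ρ(u*_ρ) ≤ ε` then
`(ρ/2)(dist_K(Gu*_ρ+g) − dist_K(Gū+g))² ≤ ε`, hence
`dist_K(Gū+g) ≤ √(2ε/ρ) + dist_K(Gu*_ρ+g)`. -/
theorem stmt10 (n m : ℕ)
    (f : EuclideanSpace ℝ (Fin n) → ℝ) (hf : ConvexOn ℝ Set.univ f)
    (hfd : Differentiable ℝ f)
    (U : Set (EuclideanSpace ℝ (Fin n))) (hUcl : IsClosed U) (hUconv : Convex ℝ U)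
    (K : Set (EuclideanSpace ℝ (Fin m))) (hKne : K.Nonempty) (hKcl : IsClosed K)
    (hKconv : Convex ℝ K) (hKcone : ∀ c : ℝ, 0 ≤ c → ∀ x ∈ K, c • x ∈ K)
    (P : EuclideanSpace ℝ (Fin m) → EuclideanSpace ℝ (Fin m))
    (hP : ∀ x, P x ∈ K ∧ ∀ y ∈ K, ‖x - P x‖ ≤ ‖x - y‖)
    (G : EuclideanSpace ℝ (Fin n) →L[ℝ] EuclideanSpace ℝ (Fin m))
    (g : EuclideanSpace ℝ (Fin m)) (ρ ε : ℝ) (hρ : 0 < ρ)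
    (uρ : EuclideanSpace ℝ (Fin n)) (huρ : uρ ∈ U)
    (hmin : ∀ u ∈ U, f uρ + ρ / 2 * ‖G uρ + g - P (G uρ + g)‖ ^ 2
      ≤ f u + ρ / 2 * ‖G u + g - P (G u + g)‖ ^ 2)
    (ubar : EuclideanSpace ℝ (Fin n)) (hubar : ubar ∈ U)
    (hε : (f ubar + ρ / 2 * ‖G ubar + g - P (G ubar + g)‖ ^ 2)
      - (f uρ + ρ / 2 * ‖G uρ + g - P (G uρ + g)‖ ^ 2) ≤ ε) :
    ρ / 2 * (‖G uρ + g - P (G uρ + g)‖ - ‖G ubar + g - P (G ubar + g)‖) ^ 2 ≤ ε ∧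
    ‖G ubar + g - P (G ubar + g)‖
      ≤ Real.sqrt (2 * ε / ρ) + ‖G uρ + g - P (G uρ + g)‖ := by
  set a := G uρ + g with ha
  set b := G ubar + g with hb
  set dρ := ‖a - P a‖ with hdρ
  set db := ‖b - P b‖ with hdb
  have hdρ0 : 0 ≤ dρ := norm_nonneg _
  have hdb0 : 0 ≤ db := norm_nonneg _
  have hε0 : 0 ≤ ε := by
    have := hmin ubar hubar
    linarith
  have key : ∀ t : ℝ, 0 < t → t ≤ 1 →
      ρ * dρ * (dρ - db) - ρ * t / 2 * (dρ - db) ^ 2 ≤ f ubar - f uρ := by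
    intro t ht0 ht1
    set u := (1 - t) • uρ + t • ubar with hu
    have huU : u ∈ U := hUconv huρ hubar (by linarith) ht0.le (by ring)
    have hfu : f u ≤ (1 - t) * f uρ + t * f ubar :=
      hf.2 (Set.mem_univ uρ) (Set.mem_univ ubar) (by linarith) ht0.le (by ring)
    have hc : G u + g = (1 - t) • a + t • b := by
      rw [hu, ha, hb, map_add, map_smul, map_smul]
      module
    have hy : (1 - t) • P a + t • P b ∈ K :=
      hKconv (hP a).1 (hP b).1 (by linarith) ht0.le (by ring)
    have hdist : ‖G u + g - P (G u + g)‖ ≤ (1 - t) * dρ + t * db := by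
      calc ‖G u + g - P (G u + g)‖ ≤ ‖G u + g - ((1 - t) • P a + t • P b)‖ :=
              (hP _).2 _ hy
        _ = ‖(1 - t) • (a - P a) + t • (b - P b)‖ := by rw [hc]; congr 1; module
        _ ≤ ‖(1 - t) • (a - P a)‖ + ‖t • (b - P b)‖ := norm_add_le _ _
        _ = (1 - t) * dρ + t * db := by
              rw [norm_smul, norm_smul, Real.norm_eq_abs, Real.norm_eq_abs,
                abs_of_nonneg (by linarith : (0:ℝ) ≤ 1 - t), abs_of_nonneg ht0.le]
    have hm := hmin u huU
    have hsq : ‖G u + g - P (G u + g)‖ ^ 2 ≤ ((1 - t) * dρ + t * db) ^ 2 := by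
      have h0 : 0 ≤ ‖G u + g - P (G u + g)‖ := norm_nonneg _
      nlinarith
    have h2 : f uρ + ρ / 2 * dρ ^ 2 ≤ (1 - t) * f uρ + t * f ubar
        + ρ / 2 * ((1 - t) * dρ + t * db) ^ 2 := by
      calc f uρ + ρ / 2 * dρ ^ 2 ≤ f u + ρ / 2 * ‖G u + g - P (G u + g)‖ ^ 2 := hm
        _ ≤ (1 - t) * f uρ + t * f ubar + ρ / 2 * ((1 - t) * dρ + t * db) ^ 2 := by
            nlinarith
    have h3 : t * (ρ * dρ * (dρ - db) - ρ * t / 2 * (dρ - db) ^ 2)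
        ≤ t * (f ubar - f uρ) := by linarith only [h2]
    exact le_of_mul_le_mul_left h3 ht0
  have h1 : ρ / 2 * (dρ - db) ^ 2 ≤ ε := by
    rcases eq_or_ne (dρ - db) 0 with hD | hD
    · rw [hD]; simpa using hε0
    · have hDpos : 0 < ρ / 2 * (dρ - db) ^ 2 := by positivity
      refine le_of_forall_pos_le_add (fun δ hδ => ?_)
      set t := min 1 (δ / (ρ / 2 * (dρ - db) ^ 2)) with ht
      have ht0 : 0 < t := lt_min one_pos (by positivity)
      have ht1 : t ≤ 1 := min_le_left _ _
      have htδ : ρ * t / 2 * (dρ - db) ^ 2 ≤ δ := by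
        have : t ≤ δ / (ρ / 2 * (dρ - db) ^ 2) := min_le_right _ _
        calc ρ * t / 2 * (dρ - db) ^ 2 = t * (ρ / 2 * (dρ - db) ^ 2) := by ring
          _ ≤ δ / (ρ / 2 * (dρ - db) ^ 2) * (ρ / 2 * (dρ - db) ^ 2) := by
              exact mul_le_mul_of_nonneg_right this hDpos.le
          _ = δ := div_mul_cancel₀ _ hDpos.ne'
      have hk := key t ht0 ht1
      nlinarith
  refine ⟨h1, ?_⟩
  have hD2 : (dρ - db) ^ 2 ≤ 2 * ε / ρ := by
    rw [le_div_iff₀ hρ]; linarith only [h1]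
  have := Real.sqrt_le_sqrt hD2
  rw [Real.sqrt_sq_eq_abs] at this
  have : -(dρ - db) ≤ Real.sqrt (2 * ε / ρ) := (neg_le_abs _).trans this
  linarith
end
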